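/- Let (L, S) be non-negative random variables on a standard Borel space with L \in RV_{-\beta}, S \in RV_{-\gamma}, \beta + 1 < \gamma. Assume the regular conditional distribution F_L(\cdot | S = s) has positive, non-increasing, continuous density f_L(\cdot | S = s) on [x_0,\infty), uniformly satisfying ess sup_s sup_{t \in K} |f_L(tx | S=s)/f_L(x | S=s) - t^{-\beta-1}| \to 0 for every compact K \subset (0,1], and E[S^\eta | L = x] \le C for all x \ge x_0 with some \eta > \gamma - \beta. Then (F_{L+S}(x) - F_L(x))/f_L(x) \sim -K(x) as x \to \infty, where K(x) = E[S | L = x]. -/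

import Mathlib

open MeasureTheory ProbabilityTheory Filter Topology

/-- Tail probability function of a random variable. -/
noncomputable def tail {Ω : Type*} [MeasurableSpace Ω] (P : Measure Ω) (X : Ω → ℝ) (x : ℝ) : ℝ :=
  (P {ω | x < X ω}).toReal

/-- Distribution function of a random variable. -/
noncomputable def cdf' {Ω : Type*} [MeasurableSpace Ω] (P : Measure Ω) (X : Ω → ℝ) (x : ℝ) : ℝ :=
  (P {ω | X ω ≤ x}).toReal

/-- Value at Risk: the α-quantile. -/
noncomputable def VaR {Ω : Type*} [MeasurableSpace Ω] (P : Measure Ω) (X : Ω → ℝ) (α : ℝ) : ℝ :=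
  sInf {x : ℝ | α ≤ cdf' P X x}

/-- f is regularly varying (at infinity) with index k. -/
def RegVary (f : ℝ → ℝ) (k : ℝ) : Prop :=
  ∀ t : ℝ, 0 < t → Tendsto (fun x => f (t * x) / f x) atTop (𝓝 (t ^ k))

theorem real_dyadic_induction {X : ℝ} (hX : 0 < X) (Pred : ℝ → Prop)
    (base : ∀ x, X ≤ x → x < 2*X → Pred x)
    (step : ∀ x, 2*X ≤ x → Pred (x/2) → Pred x) :
    ∀ x, X ≤ x → Pred x := by
  have key : ∀ n : ℕ, ∀ x, X ≤ x → x ≤ 2^n * X → Pred x := by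
    intro n
    induction n with
    | zero => intro x hx1 hx2; exact base x hx1 (by nlinarith)
    | succ n ih =>
      intro x hx1 hx2
      by_cases h : x < 2*X
      · exact base x hx1 h
      · push_neg at h
        refine step x h (ih (x/2) (by linarith) ?_)
        rw [pow_succ] at hx2; nlinarith
  intro x hx
  obtain ⟨n, hn⟩ := pow_unbounded_of_one_lt (x/X) (by norm_num : (1:ℝ) < 2)
  exact key n x hx (le_of_lt (by rwa [div_lt_iff₀ hX] at hn))

theorem dyadic_upper {f : ℝ → ℝ} {X ρ : ℝ} (hX : 0 < X) (hρ : 0 < ρ)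
    (hmono : ∀ x y, X ≤ x → x ≤ y → f y ≤ f x)
    (hd : ∀ x, X ≤ x → f (2*x) ≤ 2^(-ρ) * f x)
    (hnn : 0 ≤ f X) :
    ∀ x, X ≤ x → f x ≤ (f X * (2*X)^ρ) * x^(-ρ) := by
  refine real_dyadic_induction hX _ ?_ ?_
  · intro x hx1 hx2
    have hxpos : 0 < x := lt_of_lt_of_le hX hx1
    have h2 : (2*X)^(-ρ) ≤ x^(-ρ) :=
      Real.rpow_le_rpow_of_nonpos hxpos (le_of_lt hx2) (by linarith)
    have h3 : f X * (2*X)^ρ * (2*X)^(-ρ) ≤ f X * (2*X)^ρ * x^(-ρ) := by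
      apply mul_le_mul_of_nonneg_left h2; positivity
    have h4 : (2*X)^ρ * (2*X)^(-ρ) = 1 := by
      rw [← Real.rpow_add (by linarith)]; simp
    calc f x ≤ f X := hmono X x le_rfl hx1
    _ = f X * (2*X)^ρ * (2*X)^(-ρ) := by rw [mul_assoc, h4, mul_one]
    _ ≤ _ := h3
  · intro x hx ih
    have hx2 : X ≤ x/2 := by linarith
    have h1 : f x ≤ 2^(-ρ) * f (x/2) := by
      have := hd (x/2) hx2
      rwa [show 2*(x/2) = x by ring] at this
    have h5 : (x/2:ℝ)^(-ρ) = x^(-ρ) / 2^(-ρ) :=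
      Real.div_rpow (by linarith : (0:ℝ) ≤ x) (by norm_num : (0:ℝ) ≤ 2) (-ρ)
    have h6 : (0:ℝ) < 2^(-ρ) := Real.rpow_pos_of_pos two_pos _
    calc f x ≤ 2^(-ρ) * f (x/2) := h1
    _ ≤ 2^(-ρ) * (f X * (2*X)^ρ * (x/2)^(-ρ)) :=
        mul_le_mul_of_nonneg_left ih (le_of_lt h6)
    _ = f X * (2*X)^ρ * x^(-ρ) := by rw [h5]; field_simp

theorem dyadic_lower {f : ℝ → ℝ} {X ρ : ℝ} (hX : 0 < X) (hρ : 0 < ρ) (hnn : 0 ≤ f X)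
    (hcmp : ∀ x t, X ≤ x → 1/2 ≤ t → t ≤ 1 → f (t*x) ≤ 2^ρ * f x) :
    ∀ x, X ≤ x → (f X * X^ρ * 2^(-ρ)) * x^(-ρ) ≤ f x := by
  have h2ρ : (0:ℝ) < 2^ρ := Real.rpow_pos_of_pos two_pos _
  have h2ρ' : (0:ℝ) < 2^(-ρ) := Real.rpow_pos_of_pos two_pos _
  have hinv : (2:ℝ)^(-ρ) * 2^ρ = 1 := by rw [← Real.rpow_add two_pos]; simp
  refine real_dyadic_induction hX _ ?_ ?_
  · intro x hx1 hx2
    have hxpos : 0 < x := lt_of_lt_of_le hX hx1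
    have ht1 : (1:ℝ)/2 ≤ X/x := by rw [div_le_div_iff₀ two_pos hxpos]; linarith
    have ht2 : X/x ≤ 1 := by rw [div_le_one hxpos]; exact hx1
    have key := hcmp x (X/x) hx1 ht1 ht2
    rw [div_mul_cancel₀ X (ne_of_gt hxpos)] at key
    have hfx : 2^(-ρ) * f X ≤ f x := by
      have h7 := mul_le_mul_of_nonneg_left key (le_of_lt h2ρ')
      have h8 : (2:ℝ)^(-ρ)*(2^ρ*f x) = f x := by rw [← mul_assoc, hinv, one_mul]
      linarith
    have hmon : x^(-ρ) ≤ X^(-ρ) :=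
      Real.rpow_le_rpow_of_nonpos hX hx1 (by linarith)
    have hXX : X^ρ * X^(-ρ) = 1 := by rw [← Real.rpow_add hX]; simp
    calc f X * X^ρ * 2^(-ρ) * x^(-ρ) ≤ f X * X^ρ * 2^(-ρ) * X^(-ρ) := by
          apply mul_le_mul_of_nonneg_left hmon; positivity
    _ = 2^(-ρ) * f X := by
          calc f X * X^ρ * 2^(-ρ) * X^(-ρ) = (X^ρ * X^(-ρ)) * (2^(-ρ) * f X) := by ring
          _ = 2^(-ρ) * f X := by rw [hXX, one_mul]
    _ ≤ f x := hfx
  · intro x hx ih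
    have hxpos : 0 < x := by linarith
    have key := hcmp x (1/2) (by linarith) (le_refl _) (by norm_num)
    have h12 : (1:ℝ)/2 * x = x/2 := by ring
    rw [h12] at key
    have hfx : 2^(-ρ) * f (x/2) ≤ f x := by
      have h7 := mul_le_mul_of_nonneg_left key (le_of_lt h2ρ')
      have h8 : (2:ℝ)^(-ρ)*(2^ρ*f x) = f x := by rw [← mul_assoc, hinv, one_mul]
      linarith
    have h5 : (x/2:ℝ)^(-ρ) = x^(-ρ) / 2^(-ρ) :=
      Real.div_rpow (by linarith : (0:ℝ) ≤ x) (by norm_num : (0:ℝ) ≤ 2) (-ρ)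
    calc f X * X^ρ * 2^(-ρ) * x^(-ρ) = 2^(-ρ) * (f X * X^ρ * 2^(-ρ) * (x/2)^(-ρ)) := by
          rw [h5]; field_simp
    _ ≤ 2^(-ρ) * f (x/2) := mul_le_mul_of_nonneg_left ih (le_of_lt h2ρ')
    _ ≤ f x := hfx

set_option maxHeartbeats 2000000 in
theorem stmt16 {Ω : Type*} [MeasurableSpace Ω] (P : Measure Ω) [IsProbabilityMeasure P]
    (L S : Ω → ℝ) (hL : Measurable L) (hS : Measurable S)
    (hLpos : ∀ ω, 0 ≤ L ω) (hSpos : ∀ ω, 0 ≤ S ω)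
    (β γ x₀ C η : ℝ) (hβ : 0 < β) (hβγ : β + 1 < γ) (hx₀ : 0 < x₀) (hη : γ - β < η)
    (hRVL : RegVary (tail P L) (-β)) (hRVS : RegVary (tail P S) (-γ))
    (FLc fLc : ℝ → ℝ → ℝ) (fL : ℝ → ℝ)
    -- FLc is a regular conditional distribution function of L given S
    (hcond : ∀ x : ℝ, ∀ B : Set ℝ, MeasurableSet B →
      (P {ω | L ω ≤ x ∧ S ω ∈ B}).toReal = ∫ s in B, FLc s x ∂(P.map S))
    -- condition [E]: the conditional densities are positive, non-increasing, continuous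
    (hE : ∀ᵐ s ∂(P.map S),
      (∀ x, x₀ ≤ x → 0 < fLc s x) ∧
      (∀ x y, x₀ ≤ x → x ≤ y → fLc s y ≤ fLc s x) ∧
      ContinuousOn (fLc s) (Set.Ici x₀) ∧
      (∀ x, x₀ ≤ x → FLc s x = FLc s x₀ + ∫ y in x₀..x, fLc s y))
    -- fL is the (positive, non-increasing) marginal density of L on [x₀, ∞)
    (hfLpos : ∀ x, x₀ ≤ x → 0 < fL x)
    (hfLmono : ∀ x y, x₀ ≤ x → x ≤ y → fL y ≤ fL x)
    (hfLdens : ∀ x, x₀ ≤ x → cdf' P L x = cdf' P L x₀ + ∫ y in x₀..x, fL y)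
    (hmarg : ∀ x, x₀ ≤ x → fL x = ∫ s, fLc s x ∂(P.map S))
    -- condition [F]: uniform regular variation of the conditional densities ...
    (hF1 : ∀ K : Set ℝ, K ⊆ Set.Ioc 0 1 → IsCompact K → ∀ ε > 0, ∃ X₀ : ℝ, ∀ x ≥ X₀,
      ∀ᵐ s ∂(P.map S), ∀ t ∈ K, |fLc s (t * x) / fLc s x - t ^ (-β - 1)| ≤ ε)
    -- ... and the conditional moment bound E[S^η | L = x] ≤ C
    (hF2 : ∀ x, x₀ ≤ x → ∫ s, s ^ η * (fLc s x / fL x) ∂(P.map S) ≤ C)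
 :
    Tendsto (fun x => ((cdf' P (fun ω => L ω + S ω) x - cdf' P L x) / fL x) /
        (-(∫ s, s * (fLc s x / fL x) ∂(P.map S)))) atTop (𝓝 1) := by
  classical
  set μ : Measure ℝ := P.map S with hμdef
  have hμprob : IsProbabilityMeasure μ := Measure.isProbabilityMeasure_map hS.aemeasurable
  have hμIoi : ∀ y : ℝ, μ (Set.Ioi y) = ENNReal.ofReal (tail P S y) := by
    intro y
    rw [hμdef, Measure.map_apply hS measurableSet_Ioi]
    rw [tail, ENNReal.ofReal_toReal (measure_ne_top P _)]
    rfl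
  have hμfin : ∀ A : Set ℝ, μ A ≠ ⊤ := fun A => measure_ne_top μ A
  have hae0 : ∀ᵐ s ∂μ, 0 ≤ s := by
    rw [hμdef]
    refine (ae_map_iff hS.aemeasurable measurableSet_Ici).mpr ?_
    filter_upwards with ω using hSpos ω
  have htmono : ∀ (X : Ω → ℝ), ∀ x y : ℝ, x ≤ y → tail P X y ≤ tail P X x := by
    intro X x y hxy
    refine ENNReal.toReal_mono (measure_ne_top P _) (measure_mono ?_)
    intro ω hω; exact lt_of_le_of_lt hxy hω
  have htnn : ∀ (X : Ω → ℝ) (x : ℝ), 0 ≤ tail P X x := fun X x => ENNReal.toReal_nonneg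
  have htailpos : ∀ (X : Ω → ℝ) (k : ℝ), RegVary (tail P X) k → ∀ y, 0 < tail P X y := by
    intro X k hrv y
    by_contra hy
    push_neg at hy
    have hy0 : tail P X y = 0 := le_antisymm hy (htnn X y)
    have hzero : ∀ z, y ≤ z → tail P X z = 0 := fun z hz =>
      le_antisymm (hy0 ▸ htmono X y z hz) (htnn X z)
    have h2 := hrv 2 two_pos
    have hev : (fun x => tail P X (2*x) / tail P X x) =ᶠ[atTop] (fun _ => (0:ℝ)) := by
      filter_upwards [eventually_ge_atTop (max y 0)] with x hx
      rw [hzero x (le_trans (le_max_left _ _) hx), div_zero]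
    have h3 : Tendsto (fun _ : ℝ => (0:ℝ)) atTop (𝓝 ((2:ℝ)^k)) := Tendsto.congr' hev h2
    have h4 : (2:ℝ)^k = 0 := tendsto_nhds_unique h3 tendsto_const_nhds
    exact absurd h4 (ne_of_gt (Real.rpow_pos_of_pos two_pos k))
  have hSpos' : ∀ y, 0 < tail P S y := htailpos S (-γ) hRVS
  -- fixed exponents
  set θ : ℝ := (γ - β - 1)/3 with hθdef
  have hθ : 0 < θ := by rw [hθdef]; linarith
  set ρ₁ : ℝ := β + 1 + θ with hρ₁def
  set ρ₂ : ℝ := γ - θ with hρ₂def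
  have hρ₁pos : 0 < ρ₁ := by rw [hρ₁def]; linarith
  have hρ₂pos : 0 < ρ₂ := by rw [hρ₂def]; linarith
  have hρ₁ρ₂ : ρ₁ < ρ₂ := by rw [hρ₁def, hρ₂def, hθdef]; linarith
  have hρ₂gt1 : 1 < ρ₂ := by rw [hρ₂def, hθdef]; linarith
  -- dyadic upper bound for tail of S
  have htailS : ∃ X₂ C₁ : ℝ, 1 ≤ X₂ ∧ 0 < C₁ ∧
      (∀ m, X₂ ≤ m → tail P S (2*m) ≤ 2^(-ρ₂) * tail P S m) ∧
      (∀ m, X₂ ≤ m → tail P S m ≤ C₁ * m^(-ρ₂)) := by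
    have h2 := hRVS 2 two_pos
    have hεb : (0:ℝ) < 2^(-ρ₂) - 2^(-γ) := by
      have : (2:ℝ)^(-γ) < 2^(-ρ₂) :=
        Real.rpow_lt_rpow_of_exponent_lt one_lt_two (by rw [hρ₂def]; linarith)
      linarith
    obtain ⟨N, hN⟩ := Metric.tendsto_atTop.mp h2 _ hεb
    have hX₂1 : (1:ℝ) ≤ max N 1 := le_max_right _ _
    have hX₂pos : (0:ℝ) < max N 1 := lt_of_lt_of_le one_pos hX₂1
    have hdbl : ∀ m, max N 1 ≤ m → tail P S (2*m) ≤ 2^(-ρ₂) * tail P S m := by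
      intro m hm
      have hd := hN m (le_trans (le_max_left _ _) hm)
      rw [Real.dist_eq] at hd
      have hpos := hSpos' m
      have habs := abs_lt.mp hd
      have hr : tail P S (2*m)/tail P S m ≤ 2^(-ρ₂) := by linarith [habs.2]
      calc tail P S (2*m) = (tail P S (2*m)/tail P S m) * tail P S m := by
            field_simp
      _ ≤ 2^(-ρ₂) * tail P S m := mul_le_mul_of_nonneg_right hr (htnn _ _)
    refine ⟨max N 1, tail P S (max N 1) * (2*(max N 1))^ρ₂, hX₂1, ?_, hdbl, ?_⟩
    · have := hSpos' (max N 1)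
      positivity
    · exact dyadic_upper hX₂pos hρ₂pos (fun a b _ hab => htmono S a b hab) hdbl (htnn _ _)
  obtain ⟨X₂, C₁, hX₂1, hC₁pos, hdblS, htailSbd⟩ := htailS
  have hX₂pos : (0:ℝ) < X₂ := lt_of_lt_of_le one_pos hX₂1
  -- geometric constants
  set cg : ℝ := 2 * (1 - 2^((1:ℝ)-ρ₂))⁻¹ with hcgdef
  have hq1 : (2:ℝ)^((1:ℝ)-ρ₂) < 1 := by
    rw [← Real.rpow_zero 2]
    exact Real.rpow_lt_rpow_of_exponent_lt one_lt_two (by linarith)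
  have hqpos : (0:ℝ) < 2^((1:ℝ)-ρ₂) := Real.rpow_pos_of_pos two_pos _
  have hcgpos : 0 < cg := by
    rw [hcgdef]
    exact mul_pos two_pos (inv_pos.mpr (by linarith))
  -- J bound
  have hJ : ∀ m, X₂ ≤ m → IntegrableOn (fun s => s) (Set.Ioi m) μ ∧
      ∫ s in Set.Ioi m, s ∂μ ≤ cg * (m * tail P S m) := by
    intro m hm
    have hm0 : 0 < m := lt_of_lt_of_le hX₂pos hm
    set A : ℕ → Set ℝ := fun k => Set.Ioc ((2:ℝ)^k * m) ((2:ℝ)^(k+1) * m) with hAdef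
    have hAmeas : ∀ k, MeasurableSet (A k) := fun k => measurableSet_Ioc
    have hAdisj : Pairwise (Function.onFun Disjoint A) := by
      have key : ∀ i j : ℕ, i < j → Disjoint (A i) (A j) := by
        intro i j hij
        refine Set.disjoint_left.mpr ?_
        intro s hs1 hs2
        have h1 : s ≤ (2:ℝ)^(i+1) * m := hs1.2
        have h2 : (2:ℝ)^j * m < s := hs2.1
        have hpow : (2:ℝ)^(i+1) ≤ (2:ℝ)^j := pow_le_pow_right₀ one_le_two (by omega)
        nlinarith
      intro i j hij
      rcases lt_or_gt_of_ne hij with h | h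
      · exact key i j h
      · exact (key j i h).symm
    have hAcover : Set.Ioi m = ⋃ k, A k := by
      ext s
      simp only [Set.mem_Ioi, Set.mem_iUnion, hAdef, Set.mem_Ioc]
      constructor
      · intro hs
        have hex : ∃ n, s ≤ 2^(n+1) * m := by
          obtain ⟨n, hn⟩ := pow_unbounded_of_one_lt (s/m) (by norm_num : (1:ℝ) < 2)
          rw [div_lt_iff₀ hm0] at hn
          refine ⟨n, ?_⟩
          have : (2:ℝ)^n ≤ (2:ℝ)^(n+1) := pow_le_pow_right₀ one_le_two (Nat.le_succ n)
          nlinarith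
        refine ⟨Nat.find hex, ?_, Nat.find_spec hex⟩
        rcases Nat.eq_zero_or_pos (Nat.find hex) with hk | hk
        · rw [hk]; simpa using hs
        · have hmin := Nat.find_min hex (Nat.sub_lt hk one_pos)
          push_neg at hmin
          have heq : (Nat.find hex - 1) + 1 = Nat.find hex := Nat.succ_pred_eq_of_pos hk
          rwa [heq] at hmin
      · rintro ⟨k, hk1, hk2⟩
        have h1 : (1:ℝ) ≤ 2^k := one_le_pow₀ one_le_two
        nlinarith
    -- per-piece bound
    have hiter : ∀ k:ℕ, tail P S ((2:ℝ)^k * m) ≤ ((2:ℝ)^(-ρ₂))^k * tail P S m := by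
      intro k
      induction k with
      | zero => simp
      | succ k ih =>
        have hge : X₂ ≤ (2:ℝ)^k * m := by
          have h1 : (1:ℝ) ≤ 2^k := one_le_pow₀ one_le_two
          nlinarith
        have h1 := hdblS ((2:ℝ)^k * m) hge
        have h2 : (2:ℝ)^(k+1) * m = 2*((2:ℝ)^k*m) := by ring
        have h3 : (0:ℝ) ≤ 2^(-ρ₂) := (Real.rpow_pos_of_pos two_pos _).le
        calc tail P S ((2:ℝ)^(k+1)*m) = tail P S (2*((2:ℝ)^k*m)) := by rw [h2]
        _ ≤ 2^(-ρ₂) * tail P S ((2:ℝ)^k * m) := h1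
        _ ≤ 2^(-ρ₂) * (((2:ℝ)^(-ρ₂))^k * tail P S m) := mul_le_mul_of_nonneg_left ih h3
        _ = ((2:ℝ)^(-ρ₂))^(k+1) * tail P S m := by ring
    have hq2 : (2:ℝ)^((1:ℝ)-ρ₂) = 2*(2:ℝ)^(-ρ₂) := by
      rw [show (1:ℝ)-ρ₂ = 1 + (-ρ₂) by ring, Real.rpow_add two_pos, Real.rpow_one]
    have hpiece : ∀ k : ℕ, ∫⁻ s in A k, ENNReal.ofReal s ∂μ ≤
        ENNReal.ofReal ((2*m*tail P S m) * ((2:ℝ)^((1:ℝ)-ρ₂))^k) := by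
      intro k
      have hb1 : ∫⁻ s in A k, ENNReal.ofReal s ∂μ ≤
          ∫⁻ _ in A k, ENNReal.ofReal ((2:ℝ)^(k+1)*m) ∂μ := by
        refine setLIntegral_mono measurable_const ?_
        intro s hs
        exact ENNReal.ofReal_le_ofReal hs.2
      have hb2 : ∫⁻ _ in A k, ENNReal.ofReal ((2:ℝ)^(k+1)*m) ∂μ
          = ENNReal.ofReal ((2:ℝ)^(k+1)*m) * μ (A k) := setLIntegral_const _ _
      have hb3 : μ (A k) ≤ ENNReal.ofReal (tail P S ((2:ℝ)^k * m)) := by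
        rw [← hμIoi]
        exact measure_mono Set.Ioc_subset_Ioi_self
      have hb4 : ENNReal.ofReal ((2:ℝ)^(k+1)*m) * μ (A k) ≤
          ENNReal.ofReal ((2:ℝ)^(k+1)*m) * ENNReal.ofReal (tail P S ((2:ℝ)^k * m)) :=
        mul_le_mul_right hb3 _
      have hb5 : ENNReal.ofReal ((2:ℝ)^(k+1)*m) * ENNReal.ofReal (tail P S ((2:ℝ)^k * m))
          = ENNReal.ofReal (((2:ℝ)^(k+1)*m) * tail P S ((2:ℝ)^k * m)) := by
        rw [← ENNReal.ofReal_mul (by positivity)]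
      have hb6 : ((2:ℝ)^(k+1)*m) * tail P S ((2:ℝ)^k * m) ≤
          (2*m*tail P S m) * ((2:ℝ)^((1:ℝ)-ρ₂))^k := by
        have h1 := hiter k
        have h2 : (0:ℝ) ≤ (2:ℝ)^(k+1)*m := by positivity
        have halg : ((2:ℝ)^(k+1)*m) * (((2:ℝ)^(-ρ₂))^k * tail P S m)
            = (2*m*tail P S m) * ((2:ℝ)^((1:ℝ)-ρ₂))^k := by
          rw [hq2, mul_pow]
          ring
        calc ((2:ℝ)^(k+1)*m) * tail P S ((2:ℝ)^k * m)
            ≤ ((2:ℝ)^(k+1)*m) * (((2:ℝ)^(-ρ₂))^k * tail P S m) :=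
              mul_le_mul_of_nonneg_left h1 h2
        _ = (2*m*tail P S m) * ((2:ℝ)^((1:ℝ)-ρ₂))^k := halg
      calc ∫⁻ s in A k, ENNReal.ofReal s ∂μ ≤
          ENNReal.ofReal ((2:ℝ)^(k+1)*m) * μ (A k) := le_of_le_of_eq hb1 hb2
      _ ≤ ENNReal.ofReal (((2:ℝ)^(k+1)*m) * tail P S ((2:ℝ)^k * m)) := le_of_le_of_eq hb4 hb5
      _ ≤ _ := ENNReal.ofReal_le_ofReal hb6
    have hgeom : Summable (fun k : ℕ => ((2:ℝ)^((1:ℝ)-ρ₂))^k) :=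
      summable_geometric_of_lt_one hqpos.le hq1
    have hsum : ∫⁻ s in Set.Ioi m, ENNReal.ofReal s ∂μ ≤ ENNReal.ofReal (cg * (m * tail P S m)) := by
      rw [hAcover, lintegral_iUnion hAmeas hAdisj]
      have h1 : ∑' k, ∫⁻ s in A k, ENNReal.ofReal s ∂μ ≤
          ∑' k, ENNReal.ofReal ((2*m*tail P S m) * ((2:ℝ)^((1:ℝ)-ρ₂))^k) :=
        ENNReal.tsum_le_tsum hpiece
      have h2 : ∑' k, ENNReal.ofReal ((2*m*tail P S m) * ((2:ℝ)^((1:ℝ)-ρ₂))^k)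
          = ENNReal.ofReal (∑' k : ℕ, (2*m*tail P S m) * ((2:ℝ)^((1:ℝ)-ρ₂))^k) := by
        rw [ENNReal.ofReal_tsum_of_nonneg]
        · intro n
          exact mul_nonneg (mul_nonneg (by positivity) (htnn S m)) (by positivity)
        · exact hgeom.mul_left _
      have h3 : ∑' k : ℕ, (2*m*tail P S m) * ((2:ℝ)^((1:ℝ)-ρ₂))^k
          = (2*m*tail P S m) * (1 - (2:ℝ)^((1:ℝ)-ρ₂))⁻¹ := by
        rw [tsum_mul_left, tsum_geometric_of_lt_one hqpos.le hq1]
      have h4 : (2*m*tail P S m) * (1 - (2:ℝ)^((1:ℝ)-ρ₂))⁻¹ = cg * (m * tail P S m) := by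
        rw [hcgdef]; ring
      calc ∑' k, ∫⁻ s in A k, ENNReal.ofReal s ∂μ ≤ _ := h1
      _ = ENNReal.ofReal (cg * (m * tail P S m)) := by rw [h2, h3, h4]
    have haenn : 0 ≤ᵐ[μ.restrict (Set.Ioi m)] (fun s : ℝ => s) := by
      filter_upwards [ae_restrict_mem measurableSet_Ioi] with s hs
      exact le_of_lt (lt_trans hm0 hs)
    have hfi : HasFiniteIntegral (fun s : ℝ => s) (μ.restrict (Set.Ioi m)) := by
      rw [hasFiniteIntegral_iff_ofReal haenn]
      exact lt_of_le_of_lt hsum ENNReal.ofReal_lt_top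
    have hio : IntegrableOn (fun s : ℝ => s) (Set.Ioi m) μ :=
      ⟨aestronglyMeasurable_id, hfi⟩
    refine ⟨hio, ?_⟩
    have heq : ∫ s in Set.Ioi m, s ∂μ = (∫⁻ s in Set.Ioi m, ENNReal.ofReal s ∂μ).toReal := by
      rw [integral_eq_lintegral_of_nonneg_ae haenn aestronglyMeasurable_id]
    rw [heq]
    calc (∫⁻ s in Set.Ioi m, ENNReal.ofReal s ∂μ).toReal
        ≤ (ENNReal.ofReal (cg * (m * tail P S m))).toReal :=
          ENNReal.toReal_mono ENNReal.ofReal_ne_top hsum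
    _ ≤ cg * (m * tail P S m) := by
          rw [ENNReal.toReal_ofReal (mul_nonneg hcgpos.le (mul_nonneg hm0.le (htnn S m)))]
  -- global integrability of s
  have hIntId : Integrable (fun s : ℝ => s) μ := by
    have h1 : IntegrableOn (fun s : ℝ => s) (Set.Iic X₂) μ := by
      refine Integrable.mono' (integrable_const X₂) aestronglyMeasurable_id ?_
      rw [ae_restrict_iff' measurableSet_Iic]
      filter_upwards [hae0] with s h0 hs
      rw [Real.norm_eq_abs, abs_of_nonneg h0]; exact hs
    have h2 := (hJ X₂ le_rfl).1
    rw [← integrableOn_univ, ← Set.Iic_union_Ioi (a := X₂)]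
    exact h1.union h2
  -- positivity of cdf'
  have hcdfpos : ∀ c, x₀ < c → 0 < cdf' P L c := by
    intro c hc
    rw [hfLdens c hc.le]
    have hint : IntervalIntegrable fL volume x₀ c := by
      refine AntitoneOn.intervalIntegrable ?_
      rw [Set.uIcc_of_le hc.le]
      intro a ha b hb hab
      exact hfLmono a b ha.1 hab
    have h1 : 0 < ∫ y in x₀..c, fL y := by
      refine intervalIntegral.intervalIntegral_pos_of_pos_on hint ?_ hc
      intro y hy
      exact hfLpos y hy.1.le
    have h0 : (0:ℝ) ≤ cdf' P L x₀ := ENNReal.toReal_nonneg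
    linarith
  -- integrability of conditional cdf
  have hFLcInt : ∀ c, x₀ < c → Integrable (fun s => FLc s c) μ := by
    intro c hc
    by_contra hni
    have h0 := integral_undef hni
    have hcc := hcond c Set.univ MeasurableSet.univ
    rw [Measure.restrict_univ] at hcc
    have hset : {ω | L ω ≤ c ∧ S ω ∈ Set.univ} = {ω | L ω ≤ c} := by simp
    rw [hset] at hcc
    rw [h0] at hcc
    have := hcdfpos c hc
    rw [cdf'] at this
    linarith
  -- conditional cdf between 0 and 1
  have hμmapB : ∀ B : Set ℝ, MeasurableSet B → μ B = P (S ⁻¹' B) := by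
    intro B hB; rw [hμdef, Measure.map_apply hS hB]
  have hFLc01 : ∀ c, x₀ < c → ∀ᵐ s ∂μ, 0 ≤ FLc s c ∧ FLc s c ≤ 1 := by
    intro c hc
    have hint := hFLcInt c hc
    have h1 : 0 ≤ᵐ[μ] fun s => FLc s c := by
      refine ae_nonneg_of_forall_setIntegral_nonneg hint ?_
      intro B hB _
      have := hcond c B hB
      rw [← this]
      exact ENNReal.toReal_nonneg
    have h2 : 0 ≤ᵐ[μ] fun s => 1 - FLc s c := by
      refine ae_nonneg_of_forall_setIntegral_nonneg ((integrable_const 1).sub hint) ?_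
      intro B hB _
      rw [integral_sub ((integrableOn_const_iff (C := (1:ℝ))).mpr (Or.inr (lt_of_le_of_ne le_top (hμfin B))))
        hint.integrableOn]
      have hc1 : ∫ _ in B, (1:ℝ) ∂μ = (μ B).toReal := by
        rw [setIntegral_const, smul_eq_mul, mul_one, Measure.real]
      have hc2 := hcond c B hB
      rw [hc1, ← hc2]
      have hsub : {ω | L ω ≤ c ∧ S ω ∈ B} ⊆ S ⁻¹' B := fun ω h => h.2
      have hle : (P {ω | L ω ≤ c ∧ S ω ∈ B}).toReal ≤ (μ B).toReal := by
        refine ENNReal.toReal_mono (hμfin B) ?_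
        rw [hμmapB B hB]
        exact measure_mono hsub
      linarith
    filter_upwards [h1, h2] with s hs1 hs2
    constructor
    · exact hs1
    · have : (0:ℝ) ≤ 1 - FLc s c := hs2
      linarith
  -- density bound
  have hfLcbd : ∀ c, x₀ < c → ∀ᵐ s ∂μ, fLc s c ≤ 2/(c-x₀) := by
    intro c hc
    have hc' : x₀ < (c+x₀)/2 := by linarith
    have hcc : (c+x₀)/2 < c := by linarith
    filter_upwards [hE, hFLc01 c hc, hFLc01 ((c+x₀)/2) hc'] with s hs h1 h2
    obtain ⟨hpos, hmono, hcont, hrep⟩ := hs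
    have hii1 : IntervalIntegrable (fLc s) volume x₀ c := by
      refine ContinuousOn.intervalIntegrable (hcont.mono ?_)
      rw [Set.uIcc_of_le hc.le]
      exact fun y hy => hy.1
    have hii2 : IntervalIntegrable (fLc s) volume x₀ ((c+x₀)/2) := by
      refine ContinuousOn.intervalIntegrable (hcont.mono ?_)
      rw [Set.uIcc_of_le hc'.le]
      exact fun y hy => hy.1
    have hii : IntervalIntegrable (fLc s) volume ((c+x₀)/2) c := by
      refine ContinuousOn.intervalIntegrable (hcont.mono ?_)
      rw [Set.uIcc_of_le hcc.le]
      exact fun y hy => le_trans hc'.le hy.1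
    have hkey : FLc s c - FLc s ((c+x₀)/2) = ∫ y in ((c+x₀)/2)..c, fLc s y := by
      rw [hrep c hc.le, hrep ((c+x₀)/2) hc'.le]
      have := intervalIntegral.integral_interval_sub_left hii1 hii2
      linarith
    have hlow : (c - (c+x₀)/2) * fLc s c ≤ ∫ y in ((c+x₀)/2)..c, fLc s y := by
      have hm : (∫ (_ : ℝ) in ((c+x₀)/2)..c, fLc s c) ≤ ∫ y in ((c+x₀)/2)..c, fLc s y := by
        refine intervalIntegral.integral_mono_on hcc.le intervalIntegrable_const hii ?_
        intro y hy
        exact hmono y c (le_trans hc'.le hy.1) hy.2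
      have hcst : (∫ (_ : ℝ) in ((c+x₀)/2)..c, fLc s c) = (c - (c+x₀)/2) * fLc s c := by
        rw [intervalIntegral.integral_const, smul_eq_mul]
      linarith [hm, le_of_eq hcst]
    have ha2 : (c-x₀)/2 * fLc s c ≤ 1 := by
      have hfl : FLc s c - FLc s ((c+x₀)/2) ≤ 1 := by
        have := h1.2; have := h2.1; linarith
      have : c - (c+x₀)/2 = (c-x₀)/2 := by ring
      rw [this] at hlow
      linarith
    rw [le_div_iff₀ (by linarith : (0:ℝ) < c - x₀)]
    calc fLc s c * (c - x₀) = 2*((c-x₀)/2 * fLc s c) := by ring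
    _ ≤ 2*1 := by linarith
    _ = 2 := by norm_num
  -- ae measurability of density sections
  have hfLcmeas : ∀ c, x₀ < c → AEMeasurable (fun s => fLc s c) μ := by
    intro c hc
    have happrox : ∀ n : ℕ, AEMeasurable
        (fun s => ((n:ℝ)+1) * (FLc s (c + 1/((n:ℝ)+1)) - FLc s c)) μ := by
      intro n
      have hn : x₀ < c + 1/((n:ℝ)+1) := by
        have : (0:ℝ) < 1/((n:ℝ)+1) := by positivity
        linarith
      exact (aemeasurable_const.mul (((hFLcInt _ hn).aemeasurable).sub
        ((hFLcInt c hc).aemeasurable)))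
    have htend : ∀ᵐ s ∂μ, Tendsto
        (fun n : ℕ => ((n:ℝ)+1) * (FLc s (c + 1/((n:ℝ)+1)) - FLc s c)) atTop (𝓝 (fLc s c)) := by
      filter_upwards [hE] with s hs
      obtain ⟨hpos, hmono, hcont, hrep⟩ := hs
      have hint : ∀ b, c ≤ b → FLc s b - FLc s c = ∫ y in c..b, fLc s y := by
        intro b hb
        rw [hrep b (le_trans hc.le hb), hrep c hc.le]
        have hiib : IntervalIntegrable (fLc s) volume x₀ b := by
          refine ContinuousOn.intervalIntegrable (hcont.mono ?_)
          rw [Set.uIcc_of_le (le_trans hc.le hb)]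
          exact fun y hy => hy.1
        have hiic : IntervalIntegrable (fLc s) volume x₀ c := by
          refine ContinuousOn.intervalIntegrable (hcont.mono ?_)
          rw [Set.uIcc_of_le hc.le]
          exact fun y hy => hy.1
        have := intervalIntegral.integral_interval_sub_left hiib hiic
        linarith
      have hbounds : ∀ n : ℕ, fLc s (c + 1/((n:ℝ)+1)) ≤
          ((n:ℝ)+1) * (FLc s (c + 1/((n:ℝ)+1)) - FLc s c) ∧
          ((n:ℝ)+1) * (FLc s (c + 1/((n:ℝ)+1)) - FLc s c) ≤ fLc s c := by
        intro n
        have hnpos : (0:ℝ) < 1/((n:ℝ)+1) := by positivity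
        set b := c + 1/((n:ℝ)+1) with hbdef
        have hcb : c ≤ b := by rw [hbdef]; linarith
        have hIcc : Set.uIcc c b ⊆ Set.Ici x₀ := by
          rw [Set.uIcc_of_le hcb]
          exact fun y hy => le_trans hc.le hy.1
        have hiicb : IntervalIntegrable (fLc s) volume c b :=
          ContinuousOn.intervalIntegrable (hcont.mono hIcc)
        have hup : ∫ y in c..b, fLc s y ≤ (b - c) * fLc s c := by
          have hm : ∫ y in c..b, fLc s y ≤ (∫ (_ : ℝ) in c..b, fLc s c) := by
            refine intervalIntegral.integral_mono_on hcb hiicb intervalIntegrable_const ?_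
            intro y hy
            exact hmono c y hc.le hy.1
          have hcst : (∫ (_ : ℝ) in c..b, fLc s c) = (b - c) * fLc s c := by
            rw [intervalIntegral.integral_const, smul_eq_mul]
          linarith [hm, le_of_eq hcst]
        have hdn : (∫ (_ : ℝ) in c..b, fLc s b) ≤ ∫ y in c..b, fLc s y := by
          refine intervalIntegral.integral_mono_on hcb intervalIntegrable_const hiicb ?_
          intro y hy
          exact hmono y b (le_trans hc.le hy.1) hy.2
        have hcst2 : (∫ (_ : ℝ) in c..b, fLc s b) = (b - c) * fLc s b := by
          rw [intervalIntegral.integral_const, smul_eq_mul]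
        have hbc : b - c = 1/((n:ℝ)+1) := by rw [hbdef]; ring
        have hmul : ((n:ℝ)+1) * (1/((n:ℝ)+1)) = 1 := by field_simp
        constructor
        · have h5 : (1/((n:ℝ)+1)) * fLc s b ≤ FLc s b - FLc s c := by
            rw [hint b hcb]
            calc (1/((n:ℝ)+1)) * fLc s b = (b-c) * fLc s b := by rw [hbc]
            _ = (∫ (_ : ℝ) in c..b, fLc s b) := hcst2.symm
            _ ≤ ∫ y in c..b, fLc s y := hdn
          calc fLc s b = ((n:ℝ)+1) * ((1/((n:ℝ)+1)) * fLc s b) := by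
                rw [← mul_assoc, hmul, one_mul]
          _ ≤ ((n:ℝ)+1) * (FLc s b - FLc s c) :=
              mul_le_mul_of_nonneg_left h5 (by positivity)
        · have h5 : FLc s b - FLc s c ≤ (1/((n:ℝ)+1)) * fLc s c := by
            rw [hint b hcb, ← hbc]
            linarith [hup]
          calc ((n:ℝ)+1) * (FLc s b - FLc s c) ≤ ((n:ℝ)+1) * ((1/((n:ℝ)+1)) * fLc s c) :=
              mul_le_mul_of_nonneg_left h5 (by positivity)
          _ = fLc s c := by rw [← mul_assoc, hmul, one_mul]
      have hcv : Tendsto (fun n : ℕ => fLc s (c + 1/((n:ℝ)+1))) atTop (𝓝 (fLc s c)) := by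
        have hbase : Tendsto (fun n : ℕ => c + 1/((n:ℝ)+1)) atTop (𝓝 c) := by
          have := tendsto_one_div_add_atTop_nhds_zero_nat (𝕜 := ℝ)
          have h2 := tendsto_const_nhds (x := c) (f := atTop (α := ℕ)) |>.add this
          simpa using h2
        have hmem : ∀ n : ℕ, c + 1/((n:ℝ)+1) ∈ Set.Ici x₀ := by
          intro n
          have : (0:ℝ) < 1/((n:ℝ)+1) := by positivity
          simp only [Set.mem_Ici]; linarith
        have hwithin : Tendsto (fun n : ℕ => c + 1/((n:ℝ)+1)) atTop (𝓝[Set.Ici x₀] c) :=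
          tendsto_nhdsWithin_of_tendsto_nhds_of_eventually_within _ hbase
            (Eventually.of_forall hmem)
        exact ((hcont.continuousWithinAt (by simp only [Set.mem_Ici]; linarith)).tendsto).comp hwithin
      exact tendsto_of_tendsto_of_tendsto_of_le_of_le hcv tendsto_const_nhds
        (fun n => (hbounds n).1) (fun n => (hbounds n).2)
    exact aemeasurable_of_tendsto_metrizable_ae atTop happrox htend
  -- integrability of density sections
  have hfLcInt : ∀ c, x₀ < c → Integrable (fun s => fLc s c) μ := by
    intro c hc
    refine Integrable.mono' (integrable_const (2/(c-x₀)))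
      ((hfLcmeas c hc).aestronglyMeasurable) ?_
    filter_upwards [hfLcbd c hc, hE] with s h1 h2
    rw [Real.norm_eq_abs, abs_of_nonneg (h2.1 c hc.le).le]
    exact h1
  have hsfLcInt : ∀ c, x₀ < c → Integrable (fun s => s * fLc s c) μ := by
    intro c hc
    refine Integrable.mono' (hIntId.const_mul (2/(c-x₀)))
      ((aemeasurable_id.mul (hfLcmeas c hc)).aestronglyMeasurable) ?_
    filter_upwards [hfLcbd c hc, hE, hae0] with s h1 h2 h0
    rw [Real.norm_eq_abs, abs_of_nonneg (mul_nonneg h0 (h2.1 c hc.le).le)]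
    calc s * fLc s c ≤ s * (2/(c-x₀)) := mul_le_mul_of_nonneg_left h1 h0
    _ = 2/(c-x₀) * s := mul_comm _ _
  -- the functions I and G
  set I : ℝ → ℝ := fun x => ∫ s, s * fLc s x ∂μ with hIdef
  set G : ℝ → ℝ := fun x => ∫ s in Set.Ici 1, fLc s x ∂μ with hGdef
  have hIlow : ∃ X₃ c₂ : ℝ, max 1 (2*x₀+2) ≤ X₃ ∧ 0 < c₂ ∧
      ∀ x, X₃ ≤ x → c₂ * x^(-ρ₁) ≤ I x ∧ 0 < I x := by
    have hεb : (0:ℝ) < 2^ρ₁ - 2^(β+1) := by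
      have : (2:ℝ)^(β+1) < 2^ρ₁ :=
        Real.rpow_lt_rpow_of_exponent_lt one_lt_two (by rw [hρ₁def]; linarith)
      linarith
    obtain ⟨X₀', hX₀'⟩ := hF1 (Set.Icc (1/2) 1)
      (fun t ht => ⟨lt_of_lt_of_le (by norm_num) ht.1, ht.2⟩) isCompact_Icc _ hεb
    set X₃ : ℝ := max (max X₀' 1) (2*x₀+2) with hX₃def
    have hX₃ge : max 1 (2*x₀+2) ≤ X₃ := by
      apply max_le
      · exact le_trans (le_max_right X₀' 1) (le_max_left _ _)
      · exact le_max_right _ _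
    have hX₃1 : (1:ℝ) ≤ X₃ := le_trans (le_max_left 1 (2*x₀+2)) hX₃ge
    have hX₃pos : (0:ℝ) < X₃ := lt_of_lt_of_le one_pos hX₃1
    have hX₃x₀ : 2*x₀+2 ≤ X₃ := le_max_right _ _
    have htx₀ : ∀ x t, X₃ ≤ x → 1/2 ≤ t → t ≤ 1 → x₀ + 1 ≤ t*x := by
      intro x t hx ht1 ht2
      have h1 : 2*x₀+2 ≤ x := le_trans hX₃x₀ hx
      nlinarith
    have hcmp : ∀ x t, X₃ ≤ x → 1/2 ≤ t → t ≤ 1 → G (t*x) ≤ 2^ρ₁ * G x := by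
      intro x t hx ht1 ht2
      have hx0 : x₀ < x := by nlinarith [le_trans hX₃x₀ hx]
      have htx0 : x₀ < t*x := by linarith [htx₀ x t hx ht1 ht2]
      rw [hGdef]
      simp only
      rw [← integral_const_mul]
      refine setIntegral_mono_ae ((hfLcInt _ htx0).integrableOn)
        (((hfLcInt _ hx0).const_mul _).integrableOn) ?_
      filter_upwards [hX₀' x (le_trans (le_trans (le_max_left X₀' 1) (le_max_left _ _)) hx), hE]
        with s hs hsE
      have hb := hs t ⟨ht1, ht2⟩
      have hfpos := hsE.1 x hx0.le
      have htb : t^(-β-1) ≤ (2:ℝ)^(β+1) := by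
        have h12 : ((1:ℝ)/2)^(-β-1) = (2:ℝ)^(β+1) := by
          rw [one_div, Real.inv_rpow (by norm_num : (0:ℝ) ≤ 2),
            ← Real.rpow_neg (by norm_num : (0:ℝ) ≤ 2)]
          norm_num
          rw [add_comm]
        rw [← h12]
        exact Real.rpow_le_rpow_of_nonpos (by norm_num) ht1 (by linarith)
      have habs := abs_le.mp hb
      have hratio : fLc s (t*x) / fLc s x ≤ 2^ρ₁ := by linarith [habs.2]
      calc fLc s (t*x) = (fLc s (t*x)/fLc s x) * fLc s x := by field_simp
      _ ≤ 2^ρ₁ * fLc s x := mul_le_mul_of_nonneg_right hratio hfpos.le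
    have hX₃x₀' : x₀ < X₃ := by nlinarith
    have hGnn : ∀ x, x₀ < x → 0 ≤ G x := by
      intro x hx
      rw [hGdef]
      refine setIntegral_nonneg_of_ae_restrict ?_
      filter_upwards [ae_restrict_of_ae hE] with s hs
      exact (hs.1 x hx.le).le
    have hGpos : 0 < G X₃ := by
      rw [hGdef]
      have hnn : 0 ≤ᵐ[μ.restrict (Set.Ici 1)] (fun s => fLc s X₃) := by
        filter_upwards [ae_restrict_of_ae hE] with s hs
        exact (hs.1 X₃ hX₃x₀'.le).le
      rw [setIntegral_pos_iff_support_of_nonneg_ae hnn ((hfLcInt X₃ hX₃x₀').integrableOn)]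
      have hne : ∀ᵐ s ∂μ, ¬ (fLc s X₃ = 0) := by
        filter_upwards [hE] with s hs
        exact (hs.1 X₃ hX₃x₀'.le).ne'
      have hnull : μ (Set.Ici 1 \ Function.support (fun s => fLc s X₃)) = 0 := by
        refine measure_mono_null (fun s hs => ?_) (ae_iff.mp hne)
        have := hs.2
        simpa [Function.mem_support, not_not] using this
      have hIci : 0 < μ (Set.Ici 1) := by
        refine lt_of_lt_of_le ?_ (measure_mono Set.Ioi_subset_Ici_self)
        rw [hμIoi 1]
        exact ENNReal.ofReal_pos.mpr (hSpos' 1)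
      have hsplit : μ (Set.Ici 1) ≤ μ (Function.support (fun s => fLc s X₃) ∩ Set.Ici 1) := by
        have hid : Set.Ici (1:ℝ) = (Function.support (fun s => fLc s X₃) ∩ Set.Ici 1) ∪
            (Set.Ici 1 \ Function.support (fun s => fLc s X₃)) := by
          ext s
          simp only [Set.mem_union, Set.mem_inter_iff, Set.mem_diff]
          tauto
        calc μ (Set.Ici 1) = μ ((Function.support (fun s => fLc s X₃) ∩ Set.Ici 1) ∪
            (Set.Ici 1 \ Function.support (fun s => fLc s X₃))) := by rw [← hid]
        _ ≤ μ (Function.support (fun s => fLc s X₃) ∩ Set.Ici 1) +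
            μ (Set.Ici 1 \ Function.support (fun s => fLc s X₃)) := measure_union_le _ _
        _ = μ (Function.support (fun s => fLc s X₃) ∩ Set.Ici 1) := by rw [hnull, add_zero]
      exact lt_of_lt_of_le hIci hsplit
    have hGlow := dyadic_lower hX₃pos hρ₁pos (hGnn X₃ hX₃x₀') hcmp
    have hGI : ∀ x, x₀ < x → G x ≤ I x := by
      intro x hx
      have h1 : G x ≤ ∫ s in Set.Ici 1, s * fLc s x ∂μ := by
        rw [hGdef]
        refine setIntegral_mono_ae_restrict ((hfLcInt x hx).integrableOn)
          ((hsfLcInt x hx).integrableOn) ?_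
        filter_upwards [ae_restrict_of_ae hE, ae_restrict_mem measurableSet_Ici] with s hs hmem
        exact le_mul_of_one_le_left (hs.1 x hx.le).le hmem
      have h2 : ∫ s in Set.Ici 1, s * fLc s x ∂μ ≤ I x := by
        rw [hIdef]
        refine setIntegral_le_integral (hsfLcInt x hx) ?_
        filter_upwards [hE, hae0] with s hs h0
        exact mul_nonneg h0 (hs.1 x hx.le).le
      linarith
    refine ⟨X₃, G X₃ * X₃^ρ₁ * 2^(-ρ₁), hX₃ge, ?_, ?_⟩
    · exact mul_pos (mul_pos hGpos (Real.rpow_pos_of_pos hX₃pos _))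
        (Real.rpow_pos_of_pos two_pos _)
    · intro x hx
      have hx0 : x₀ < x := lt_of_lt_of_le hX₃x₀' hx
      have h1 := hGlow x hx
      have h2 := hGI x hx0
      have h3 : 0 < G X₃ * X₃^ρ₁ * 2^(-ρ₁) * x^(-ρ₁) :=
        mul_pos (mul_pos (mul_pos hGpos (Real.rpow_pos_of_pos hX₃pos _))
          (Real.rpow_pos_of_pos two_pos _))
          (Real.rpow_pos_of_pos (lt_of_lt_of_le hX₃pos hx) _)
      exact ⟨by linarith, by linarith⟩
  obtain ⟨X₃, c₂, hX₃ge, hc₂pos, hIlower⟩ := hIlow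
  -- MAIN sandwich estimate
  have hKEY : ∀ ea : ℝ, 0 < ea → ea ≤ 1/4 → ∀ᶠ x in atTop,
      |(P {ω | L ω ≤ x ∧ x < L ω + S ω}).toReal / I x - 1| ≤ 4 * ea := by
    intro ea heapos hea14
    -- choose δ
    obtain ⟨δ, hδpos, hδhalf, hδM⟩ : ∃ δ : ℝ, 0 < δ ∧ δ ≤ 1/2 ∧ (1-δ)^(-β-1) ≤ 1 + ea/2 := by
      have hcont : ContinuousAt (fun u : ℝ => u^(-β-1)) 1 :=
        Real.continuousAt_rpow_const 1 _ (Or.inl one_ne_zero)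
      have h1 : (1:ℝ)^(-β-1) = 1 := Real.one_rpow _
      rw [Metric.continuousAt_iff] at hcont
      obtain ⟨δ', hδ'pos, hδ'⟩ := hcont (ea/2) (by linarith)
      have hmpos : (0:ℝ) < min (δ'/2) (1/2) := lt_min (by linarith) (by norm_num)
      refine ⟨min (δ'/2) (1/2), hmpos, min_le_right _ _, ?_⟩
      have hδlt : dist (1 - min (δ'/2) (1/2)) 1 < δ' := by
        rw [Real.dist_eq]
        have h3 : min (δ'/2) (1/2) ≤ δ'/2 := min_le_left _ _
        rw [show (1:ℝ) - min (δ'/2) (1/2) - 1 = -(min (δ'/2) (1/2)) by ring, abs_neg,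
          abs_of_pos hmpos]
        linarith
      have h4 := hδ' hδlt
      rw [Real.dist_eq, h1] at h4
      have h5 := abs_lt.mp h4
      linarith [h5.2]
    have hδ1 : δ < 1 := lt_of_le_of_lt hδhalf (by norm_num)
    obtain ⟨X₄, hX₄⟩ := hF1 (Set.Icc (1-δ) 1)
      (fun t ht => ⟨by linarith [ht.1], ht.2⟩) isCompact_Icc (ea/2) (by linarith)
    set M : ℝ := (1-δ)^(-β-1) + ea/2 with hMdef
    have hM1 : M ≤ 1 + ea := by rw [hMdef]; linarith
    have hrp1δ : (0:ℝ) < (1-δ)^(-β-1) := Real.rpow_pos_of_pos (by linarith) _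
    have hMpos : 0 < M := by rw [hMdef]; linarith
    have hMge1 : 1 ≤ M := by
      have h2 : (1:ℝ)^(-β-1) ≤ (1-δ)^(-β-1) :=
        Real.rpow_le_rpow_of_nonpos (by linarith) (by linarith) (by linarith)
      rw [Real.one_rpow] at h2
      rw [hMdef]
      linarith
    -- generic eventual smallness
    have hevgen : ∀ K' : ℝ, ∀ᶠ x : ℝ in atTop, K' * (δ*x)^(-ρ₂) ≤ ea * (c₂ * x^(-ρ₁)) := by
      intro K'
      have htt : Tendsto (fun x : ℝ => (K' * δ^(-ρ₂)) * x^(-(ρ₂-ρ₁))) atTop (𝓝 0) := by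
        have h0 := tendsto_rpow_neg_atTop (by linarith : (0:ℝ) < ρ₂-ρ₁)
        have h1 := h0.const_mul (K' * δ^(-ρ₂))
        simpa using h1
      have hsm : ∀ᶠ x : ℝ in atTop, (K' * δ^(-ρ₂)) * x^(-(ρ₂-ρ₁)) < ea*c₂ :=
        htt.eventually_lt_const (by positivity)
      filter_upwards [hsm, eventually_gt_atTop 0] with x hx hx0
      have hxsplit : x^(-ρ₂) = x^(-(ρ₂-ρ₁)) * x^(-ρ₁) := by
        rw [← Real.rpow_add hx0]
        congr 1
        ring
      have hrpos : (0:ℝ) ≤ x^(-ρ₁) := (Real.rpow_pos_of_pos hx0 _).le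
      have heq : K' * (δ*x)^(-ρ₂) = ((K' * δ^(-ρ₂)) * x^(-(ρ₂-ρ₁))) * x^(-ρ₁) := by
        rw [Real.mul_rpow hδpos.le hx0.le, hxsplit]
        ring
      rw [heq]
      calc ((K' * δ^(-ρ₂)) * x^(-(ρ₂-ρ₁))) * x^(-ρ₁) ≤ (ea*c₂) * x^(-ρ₁) :=
            mul_le_mul_of_nonneg_right hx.le hrpos
      _ = ea * (c₂ * x^(-ρ₁)) := by ring
    filter_upwards [hevgen C₁, hevgen (4*δ*cg*C₁), eventually_ge_atTop X₄,
      eventually_ge_atTop X₃, eventually_ge_atTop ((X₂+1)/δ), eventually_ge_atTop (2*x₀+2)]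
      with x hv1 hv2 hxX₄ hxX₃ hxX₂ hxx₀big
    -- basic per-x facts
    have hx0 : (0:ℝ) < x := by linarith only [hxx₀big, hx₀]
    have hxx₀' : x₀ < x := by linarith only [hxx₀big, hx₀]
    have hδxX₂ : X₂ ≤ δ*x := by
      have h' : X₂ + 1 ≤ x*δ := (div_le_iff₀ hδpos).mp hxX₂
      have h'' : x*δ = δ*x := mul_comm x δ
      linarith only [h', h'']
    obtain ⟨hIlo, hIpos⟩ := hIlower x hxX₃
    have hfLx : 0 < fL x := hfLpos x hxx₀'.le
    have hhalfx : x₀ + 1 ≤ x/2 := by linarith only [hxx₀big]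
    have h1δx : x/2 ≤ (1-δ)*x := by
      have hd := mul_le_mul_of_nonneg_right hδhalf hx0.le
      linarith only [hd]
    -- partition size
    set Dn : ℕ := max 1 ⌈(δ*x*fL x)/(ea * I x)⌉₊ with hDndef
    have hn1 : 1 ≤ Dn := le_max_left _ _
    have hDnpos : (0:ℝ) < (Dn:ℝ) := by exact_mod_cast hn1
    have hnR : (δ*x*fL x)/(ea*I x) ≤ (Dn:ℝ) := by
      refine le_trans (Nat.le_ceil _) ?_
      exact_mod_cast Nat.cast_le.mpr (le_max_right _ _)
    set h : ℝ := δ*x/Dn with hhdef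
    have hhpos : 0 < h := by rw [hhdef]; positivity
    have hhfL : h * fL x ≤ ea * I x := by
      have h1 : δ*x*fL x ≤ (ea*I x) * Dn := by
        have h2 := hnR
        rw [div_le_iff₀ (by positivity : (0:ℝ) < ea * I x)] at h2
        linarith only [h2]
      rw [hhdef, div_mul_eq_mul_div, div_le_iff₀ hDnpos]
      linarith only [h1]
    have hnh : (Dn:ℝ) * h = δ*x := by
      rw [hhdef]
      field_simp
    -- the partition
    set B : ℕ → Set ℝ := fun k => Set.Ioc ((k:ℝ)*h) (((k:ℝ)+1)*h) with hBdef
    have hBmeas : ∀ k : ℕ, MeasurableSet (B k) := fun k => measurableSet_Ioc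
    have hcover : ∀ n : ℕ, (⋃ k ∈ Finset.range n, B k) = Set.Ioc 0 ((n:ℝ)*h) := by
      intro n
      induction n with
      | zero => simp
      | succ n ih =>
        rw [Finset.range_add_one, Finset.set_biUnion_insert, ih, Set.union_comm]
        rw [hBdef]
        push_cast
        exact Set.Ioc_union_Ioc_eq_Ioc (by positivity) (by linarith only [hhpos])
    have hkh_le : ∀ k : ℕ, k < Dn → ((k:ℝ)+1)*h ≤ δ*x := by
      intro k hk
      have h1 : (k:ℝ)+1 ≤ (Dn:ℝ) := by exact_mod_cast Nat.succ_le_of_lt hk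
      calc ((k:ℝ)+1)*h ≤ (Dn:ℝ)*h := mul_le_mul_of_nonneg_right h1 hhpos.le
      _ = δ*x := hnh
    -- event
    set E : Set Ω := {ω | L ω ≤ x ∧ x < L ω + S ω} with hEdef
    have hEmeas : MeasurableSet E :=
      (measurableSet_le hL measurable_const).inter
        (measurableSet_lt measurable_const (hL.add hS))
    -- segment identity
    have hseg : ∀ a : ℝ, a ≤ x → ∀ Bs : Set ℝ, MeasurableSet Bs →
        (P ({ω | a < L ω ∧ L ω ≤ x} ∩ S ⁻¹' Bs)).toReal
        = (P {ω | L ω ≤ x ∧ S ω ∈ Bs}).toReal - (P {ω | L ω ≤ a ∧ S ω ∈ Bs}).toReal := by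
      intro a hax Bs hB
      have hsub : {ω | L ω ≤ a ∧ S ω ∈ Bs} ⊆ {ω | L ω ≤ x ∧ S ω ∈ Bs} :=
        fun ω hω => ⟨le_trans hω.1 hax, hω.2⟩
      have hmeasa : MeasurableSet {ω | L ω ≤ a ∧ S ω ∈ Bs} :=
        (measurableSet_le hL measurable_const).inter (hS hB)
      have hdiff : {ω | L ω ≤ x ∧ S ω ∈ Bs} \ {ω | L ω ≤ a ∧ S ω ∈ Bs}
          = {ω | a < L ω ∧ L ω ≤ x} ∩ S ⁻¹' Bs := by
        ext ω
        simp only [Set.mem_diff, Set.mem_setOf_eq, Set.mem_inter_iff, Set.mem_preimage]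
        constructor
        · rintro ⟨⟨h1, h2⟩, h3⟩
          refine ⟨⟨?_, h1⟩, h2⟩
          by_contra h4
          push_neg at h4
          exact h3 ⟨h4, h2⟩
        · rintro ⟨⟨h1, h2⟩, h3⟩
          exact ⟨⟨h2, h3⟩, fun hc => absurd hc.1 (not_le.mpr h1)⟩
      rw [← hdiff, measure_diff hsub hmeasa.nullMeasurableSet (measure_ne_top P _),
        ENNReal.toReal_sub_of_le (measure_mono hsub) (measure_ne_top P _)]
    -- ae comparison of increments
    have hcompare : ∀ a : ℝ, (1-δ)*x ≤ a → a ≤ x → ∀ᵐ s ∂μ,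
        (x - a) * fLc s x ≤ FLc s x - FLc s a ∧
        FLc s x - FLc s a ≤ (x - a) * (M * fLc s x) := by
      intro a ha1 ha2
      have hax₀ : x₀ < a := by linarith only [ha1, h1δx, hhalfx]
      filter_upwards [hE, hX₄ x hxX₄] with s hs hsF
      obtain ⟨hpos, hmono, hcont, hrep⟩ := hs
      have hiiax : IntervalIntegrable (fLc s) volume a x :=
        ContinuousOn.intervalIntegrable (hcont.mono (by
          rw [Set.uIcc_of_le ha2]
          exact fun y hy => le_trans hax₀.le hy.1))
      have hiib : IntervalIntegrable (fLc s) volume x₀ x :=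
        ContinuousOn.intervalIntegrable (hcont.mono (by
          rw [Set.uIcc_of_le hxx₀'.le]
          exact fun y hy => hy.1))
      have hiia : IntervalIntegrable (fLc s) volume x₀ a :=
        ContinuousOn.intervalIntegrable (hcont.mono (by
          rw [Set.uIcc_of_le hax₀.le]
          exact fun y hy => hy.1))
      have hint : FLc s x - FLc s a = ∫ y in a..x, fLc s y := by
        rw [hrep x hxx₀'.le, hrep a hax₀.le]
        have := intervalIntegral.integral_interval_sub_left hiib hiia
        linarith
      constructor
      · rw [hint]
        have hm : (∫ (_:ℝ) in a..x, fLc s x) ≤ ∫ y in a..x, fLc s y :=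
          intervalIntegral.integral_mono_on ha2 intervalIntegrable_const hiiax
            (fun y hy => hmono y x (le_trans hax₀.le hy.1) hy.2)
        have hcst : (∫ (_:ℝ) in a..x, fLc s x) = (x-a)*fLc s x := by
          rw [intervalIntegral.integral_const, smul_eq_mul]
        linarith
      · rw [hint]
        have hfa : fLc s a ≤ M * fLc s x := by
          rcases eq_or_lt_of_le ha2 with heq | _
          · rw [heq]
            have hfx := hpos x hxx₀'.le
            have h9 := mul_le_mul_of_nonneg_right hMge1 hfx.le
            linarith only [h9]
          · have ht1 : 1-δ ≤ a/x := by
              rw [le_div_iff₀ hx0]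
              linarith
            have ht2 : a/x ≤ 1 := by
              rw [div_le_one hx0]
              exact ha2
            have hb := hsF (a/x) ⟨ht1, ht2⟩
            rw [div_mul_cancel₀ a (ne_of_gt hx0)] at hb
            have habs := abs_le.mp hb
            have htb : (a/x)^(-β-1) ≤ (1-δ)^(-β-1) :=
              Real.rpow_le_rpow_of_nonpos (by linarith) ht1 (by linarith)
            have hratio : fLc s a / fLc s x ≤ M := by
              rw [hMdef]
              linarith [habs.2]
            have hfx := hpos x hxx₀'.le
            calc fLc s a = (fLc s a / fLc s x) * fLc s x := by field_simp
            _ ≤ M * fLc s x := mul_le_mul_of_nonneg_right hratio hfx.le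
        have hm : ∫ y in a..x, fLc s y ≤ (∫ (_:ℝ) in a..x, fLc s a) :=
          intervalIntegral.integral_mono_on ha2 hiiax intervalIntegrable_const
            (fun y hy => hmono a y hax₀.le hy.1)
        have hcst : (∫ (_:ℝ) in a..x, fLc s a) = (x-a)*fLc s a := by
          rw [intervalIntegral.integral_const, smul_eq_mul]
        have hfin : (x-a)*fLc s a ≤ (x-a)*(M*fLc s x) :=
          mul_le_mul_of_nonneg_left hfa (by linarith)
        linarith
    -- upper bound per piece
    have hupk : ∀ k ∈ Finset.range Dn, (P (E ∩ S ⁻¹' (B k))).toReal ≤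
        ∫ s in B k, (M*(s*fLc s x) + (h*M)*fLc s x) ∂μ := by
      intro k hk
      have hkh := hkh_le k (Finset.mem_range.mp hk)
      set a : ℝ := x - ((k:ℝ)+1)*h with hadef
      have ha1 : (1-δ)*x ≤ a := by
        rw [hadef]
        linarith only [hkh]
      have ha2 : a ≤ x := by
        rw [hadef]
        have hk0 : (0:ℝ) ≤ ((k:ℝ)+1)*h := by positivity
        linarith
      have hax₀ : x₀ < a := by linarith only [ha1, h1δx, hhalfx]
      have hsubev : E ∩ S ⁻¹' (B k) ⊆ {ω | a < L ω ∧ L ω ≤ x} ∩ S ⁻¹' (B k) := by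
        intro ω hω
        obtain ⟨hωE, hωB⟩ := hω
        refine ⟨⟨?_, hωE.1⟩, hωB⟩
        have h1 : S ω ≤ ((k:ℝ)+1)*h := hωB.2
        have h2 : x < L ω + S ω := hωE.2
        rw [hadef]
        linarith
      have hup1 : (P (E ∩ S ⁻¹' (B k))).toReal ≤
          (P ({ω | a < L ω ∧ L ω ≤ x} ∩ S ⁻¹' (B k))).toReal :=
        ENNReal.toReal_mono (measure_ne_top P _) (measure_mono hsubev)
      have hmid := hseg a ha2 (B k) (hBmeas k)
      rw [hcond x (B k) (hBmeas k), hcond a (B k) (hBmeas k)] at hmid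
      have hfinal : ∫ s in B k, (FLc s x - FLc s a) ∂μ ≤
          ∫ s in B k, (M*(s*fLc s x) + (h*M)*fLc s x) ∂μ := by
        refine setIntegral_mono_ae_restrict
          (((hFLcInt x hxx₀').sub (hFLcInt a hax₀)).integrableOn)
          ((((hsfLcInt x hxx₀').const_mul M).add
            ((hfLcInt x hxx₀').const_mul (h*M))).integrableOn) ?_
        filter_upwards [ae_restrict_of_ae (hcompare a ha1 ha2), ae_restrict_of_ae hE,
          ae_restrict_mem (hBmeas k)] with s hcmp2 hsE hmem
        have hub := hcmp2.2
        have hxa : x - a = (k:ℝ)*h + h := by rw [hadef]; ring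
        have hfpos := (hsE.1 x hxx₀'.le).le
        have hs1 : (k:ℝ)*h < s := hmem.1
        calc FLc s x - FLc s a ≤ (x-a)*(M*fLc s x) := hub
        _ = ((k:ℝ)*h + h)*(M*fLc s x) := by rw [hxa]
        _ ≤ (s + h)*(M*fLc s x) := by
            refine mul_le_mul_of_nonneg_right (by linarith) (mul_nonneg hMpos.le hfpos)
        _ = M*(s*fLc s x) + (h*M)*fLc s x := by ring
      have hdiffint : ∫ s in B k, FLc s x ∂μ - ∫ s in B k, FLc s a ∂μ
          = ∫ s in B k, (FLc s x - FLc s a) ∂μ :=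
        (integral_sub ((hFLcInt x hxx₀').integrableOn) ((hFLcInt a hax₀).integrableOn)).symm
      calc (P (E ∩ S ⁻¹' (B k))).toReal ≤
          (P ({ω | a < L ω ∧ L ω ≤ x} ∩ S ⁻¹' (B k))).toReal := hup1
      _ = ∫ s in B k, FLc s x ∂μ - ∫ s in B k, FLc s a ∂μ := hmid
      _ = ∫ s in B k, (FLc s x - FLc s a) ∂μ := hdiffint
      _ ≤ _ := hfinal
    -- lower bound per piece
    have hlok : ∀ k ∈ Finset.range Dn, (∫ s in B k, (s*fLc s x - h*fLc s x) ∂μ) ≤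
        (P (E ∩ S ⁻¹' (B k))).toReal := by
      intro k hk
      have hkh := hkh_le k (Finset.mem_range.mp hk)
      set b : ℝ := x - (k:ℝ)*h with hbdef
      have hkh' : (k:ℝ)*h ≤ δ*x := by
        linarith only [hkh, hhpos]
      have hb1 : (1-δ)*x ≤ b := by
        rw [hbdef]
        linarith
      have hb2 : b ≤ x := by
        rw [hbdef]
        have : (0:ℝ) ≤ (k:ℝ)*h := by positivity
        linarith
      have hbx₀ : x₀ < b := by linarith only [hb1, h1δx, hhalfx]
      have hsupev : {ω | b < L ω ∧ L ω ≤ x} ∩ S ⁻¹' (B k) ⊆ E ∩ S ⁻¹' (B k) := by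
        intro ω hω
        obtain ⟨⟨hω1, hω2⟩, hωB⟩ := hω
        refine ⟨⟨hω2, ?_⟩, hωB⟩
        have h1 : (k:ℝ)*h < S ω := hωB.1
        rw [hbdef] at hω1
        linarith
      have hlo1 : (P ({ω | b < L ω ∧ L ω ≤ x} ∩ S ⁻¹' (B k))).toReal ≤
          (P (E ∩ S ⁻¹' (B k))).toReal :=
        ENNReal.toReal_mono (measure_ne_top P _) (measure_mono hsupev)
      have hmid := hseg b hb2 (B k) (hBmeas k)
      rw [hcond x (B k) (hBmeas k), hcond b (B k) (hBmeas k)] at hmid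
      have hfinal : ∫ s in B k, (s*fLc s x - h*fLc s x) ∂μ ≤
          ∫ s in B k, (FLc s x - FLc s b) ∂μ := by
        refine setIntegral_mono_ae_restrict
          (((hsfLcInt x hxx₀').sub ((hfLcInt x hxx₀').const_mul h)).integrableOn)
          (((hFLcInt x hxx₀').sub (hFLcInt b hbx₀)).integrableOn) ?_
        filter_upwards [ae_restrict_of_ae (hcompare b hb1 hb2), ae_restrict_of_ae hE,
          ae_restrict_mem (hBmeas k)] with s hcmp2 hsE hmem
        have hlb := hcmp2.1
        have hxb : x - b = (k:ℝ)*h := by rw [hbdef]; ring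
        have hfpos := (hsE.1 x hxx₀'.le).le
        have hs2 : s ≤ ((k:ℝ)+1)*h := hmem.2
        calc s*fLc s x - h*fLc s x = (s - h)*fLc s x := by ring
        _ ≤ ((k:ℝ)*h)*fLc s x := mul_le_mul_of_nonneg_right (by linarith) hfpos
        _ = (x-b)*fLc s x := by rw [hxb]
        _ ≤ FLc s x - FLc s b := hlb
      calc ∫ s in B k, (s*fLc s x - h*fLc s x) ∂μ ≤
          ∫ s in B k, (FLc s x - FLc s b) ∂μ := hfinal
      _ = ∫ s in B k, FLc s x ∂μ - ∫ s in B k, FLc s b ∂μ :=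
          integral_sub ((hFLcInt x hxx₀').integrableOn) ((hFLcInt b hbx₀).integrableOn)
      _ = (P ({ω | b < L ω ∧ L ω ≤ x} ∩ S ⁻¹' (B k))).toReal := hmid.symm
      _ ≤ _ := hlo1
    -- pairwise disjointness of pieces
    have hpd : (↑(Finset.range Dn) : Set ℕ).PairwiseDisjoint (fun k => B k) := by
      intro i _ j _ hij
      refine Set.disjoint_left.mpr ?_
      intro sv h1 h2
      rcases lt_or_gt_of_ne hij with hlt | hlt
      · have hc : ((i:ℝ)+1) ≤ (j:ℝ) := by exact_mod_cast Nat.succ_le_of_lt hlt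
        have hc1 : sv ≤ ((i:ℝ)+1)*h := h1.2
        have hc2 : (j:ℝ)*h < sv := h2.1
        have hc3 := mul_le_mul_of_nonneg_right hc hhpos.le
        linarith only [hc1, hc2, hc3]
      · have hc : ((j:ℝ)+1) ≤ (i:ℝ) := by exact_mod_cast Nat.succ_le_of_lt hlt
        have hc1 : sv ≤ ((j:ℝ)+1)*h := h2.2
        have hc2 : (i:ℝ)*h < sv := h1.1
        have hc3 := mul_le_mul_of_nonneg_right hc hhpos.le
        linarith only [hc1, hc2, hc3]
    -- decomposition of the event measure
    have hEdecomp : (P E).toReal = (∑ k ∈ Finset.range Dn, (P (E ∩ S ⁻¹' (B k))).toReal)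
        + (P (E ∩ S ⁻¹' (Set.Ioi (δ*x)))).toReal := by
      have hunion : E = (⋃ k ∈ Finset.range Dn, (E ∩ S ⁻¹' (B k))) ∪
          (E ∩ S ⁻¹' (Set.Ioi (δ*x))) := by
        ext ω
        simp only [Set.mem_union, Set.mem_iUnion, Set.mem_inter_iff, Set.mem_preimage,
          exists_prop]
        constructor
        · intro hω
          have hSω : 0 < S ω := by
            have h1 : L ω ≤ x := hω.1
            have h2 : x < L ω + S ω := hω.2
            linarith only [h1, h2]
          by_cases hcase : S ω ≤ δ*x
          · left
            have hmem : S ω ∈ Set.Ioc 0 ((Dn:ℝ)*h) := by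
              rw [hnh]
              exact ⟨hSω, hcase⟩
            rw [← hcover Dn] at hmem
            simp only [Set.mem_iUnion, exists_prop] at hmem
            obtain ⟨k, hk1, hk2⟩ := hmem
            exact ⟨k, hk1, hω, hk2⟩
          · right
            exact ⟨hω, not_le.mp hcase⟩
        · rintro (⟨k, _, hω, _⟩ | ⟨hω, _⟩) <;> exact hω
      have hdisj2 : Disjoint (⋃ k ∈ Finset.range Dn, (E ∩ S ⁻¹' (B k)))
          (E ∩ S ⁻¹' (Set.Ioi (δ*x))) := by
        refine Set.disjoint_left.mpr ?_
        intro ω hω1 hω2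
        simp only [Set.mem_iUnion, Set.mem_inter_iff, Set.mem_preimage, exists_prop] at hω1 hω2
        obtain ⟨k, hk, _, hωB⟩ := hω1
        have h1 : S ω ≤ ((k:ℝ)+1)*h := hωB.2
        have h2 : δ*x < S ω := hω2.2
        have h3 := hkh_le k (Finset.mem_range.mp hk)
        linarith only [h1, h2, h3]
      have hm2 : MeasurableSet (E ∩ S ⁻¹' (Set.Ioi (δ*x))) :=
        hEmeas.inter (hS measurableSet_Ioi)
      have hpd2 : (↑(Finset.range Dn) : Set ℕ).PairwiseDisjoint
          (fun k => E ∩ S ⁻¹' (B k)) := by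
        intro i hi j hj hij
        have := hpd hi hj hij
        exact (this.preimage S).inter_left' E |>.inter_right' E
      have hPE : P E = (∑ k ∈ Finset.range Dn, P (E ∩ S ⁻¹' (B k)))
          + P (E ∩ S ⁻¹' (Set.Ioi (δ*x))) := by
        conv_lhs => rw [hunion]
        rw [measure_union hdisj2 hm2,
          measure_biUnion_finset hpd2 (fun k _ => hEmeas.inter (hS (hBmeas k)))]
      rw [hPE, ENNReal.toReal_add (ENNReal.sum_ne_top.mpr (fun k _ => measure_ne_top P _))
        (measure_ne_top P _), ENNReal.toReal_sum (fun k _ => measure_ne_top P _)]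
    -- sum of pieces equals integral over (0, δx]
    have hsum_up : ∑ k ∈ Finset.range Dn, ∫ s in B k, (M*(s*fLc s x) + (h*M)*fLc s x) ∂μ
        = ∫ s in Set.Ioc 0 (δ*x), (M*(s*fLc s x) + (h*M)*fLc s x) ∂μ := by
      have hbu := integral_biUnion_finset (μ := μ)
        (f := fun sv => M*(sv*fLc sv x) + (h*M)*fLc sv x) (Finset.range Dn)
        (fun k _ => hBmeas k) hpd
        (fun k _ => (((hsfLcInt x hxx₀').const_mul M).add
          ((hfLcInt x hxx₀').const_mul (h*M))).integrableOn)
      rw [hcover Dn, hnh] at hbu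
      exact hbu.symm
    have hsum_lo : ∑ k ∈ Finset.range Dn, ∫ s in B k, (s*fLc s x - h*fLc s x) ∂μ
        = ∫ s in Set.Ioc 0 (δ*x), (s*fLc s x - h*fLc s x) ∂μ := by
      have hbu := integral_biUnion_finset (μ := μ)
        (f := fun sv => sv*fLc sv x - h*fLc sv x) (Finset.range Dn)
        (fun k _ => hBmeas k) hpd
        (fun k _ => ((hsfLcInt x hxx₀').sub
          ((hfLcInt x hxx₀').const_mul h)).integrableOn)
      rw [hcover Dn, hnh] at hbu
      exact hbu.symm
    -- integral bounds on (0, δx]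
    have hIoc_sfLc_le : ∫ s in Set.Ioc 0 (δ*x), s*fLc s x ∂μ ≤ I x := by
      refine setIntegral_le_integral (hsfLcInt x hxx₀') ?_
      filter_upwards [hE, hae0] with s hs h0
      exact mul_nonneg h0 (hs.1 x hxx₀'.le).le
    have hIoc_fLc_le : ∫ s in Set.Ioc 0 (δ*x), fLc s x ∂μ ≤ fL x := by
      have h1 : ∫ s in Set.Ioc 0 (δ*x), fLc s x ∂μ ≤ ∫ s, fLc s x ∂μ := by
        refine setIntegral_le_integral (hfLcInt x hxx₀') ?_
        filter_upwards [hE] with s hs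
        exact (hs.1 x hxx₀'.le).le
      rw [← hmarg x hxx₀'.le] at h1
      exact h1
    -- tail term bound
    have htailterm : (P (E ∩ S ⁻¹' (Set.Ioi (δ*x)))).toReal ≤ ea * I x := by
      have h1 : (P (E ∩ S ⁻¹' (Set.Ioi (δ*x)))).toReal ≤ tail P S (δ*x) := by
        rw [tail]
        refine ENNReal.toReal_mono (measure_ne_top P _) (measure_mono ?_)
        intro ω hω
        exact hω.2
      calc (P (E ∩ S ⁻¹' (Set.Ioi (δ*x)))).toReal ≤ tail P S (δ*x) := h1
      _ ≤ C₁*(δ*x)^(-ρ₂) := htailSbd _ hδxX₂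
      _ ≤ ea*(c₂*x^(-ρ₁)) := hv1
      _ ≤ ea*I x := mul_le_mul_of_nonneg_left hIlo heapos.le
    -- decomposition of I
    have hIdecomp : I x = (∫ s in Set.Iic 0, s*fLc s x ∂μ)
        + ((∫ s in Set.Ioc 0 (δ*x), s*fLc s x ∂μ) + (∫ s in Set.Ioi (δ*x), s*fLc s x ∂μ)) := by
      have h1 : Set.Iic (0:ℝ) ∪ (Set.Ioc 0 (δ*x) ∪ Set.Ioi (δ*x)) = Set.univ := by
        rw [Set.Ioc_union_Ioi_eq_Ioi (by positivity : (0:ℝ) ≤ δ*x), Set.Iic_union_Ioi]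
      have hd1 : Disjoint (Set.Iic (0:ℝ)) (Set.Ioc 0 (δ*x) ∪ Set.Ioi (δ*x)) := by
        refine Set.disjoint_left.mpr ?_
        intro sv h1' h2'
        rcases h2' with h | h
        · exact absurd h.1 (not_lt.mpr h1')
        · have : (0:ℝ) < δ*x := by positivity
          have h3 : (0:ℝ) < sv := lt_trans this h
          exact absurd h3 (not_lt.mpr h1')
      have hd2 : Disjoint (Set.Ioc (0:ℝ) (δ*x)) (Set.Ioi (δ*x)) := by
        refine Set.disjoint_left.mpr ?_
        intro sv h1' h2'
        exact absurd h2' (not_lt.mpr h1'.2)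
      calc I x = ∫ s in Set.univ, s*fLc s x ∂μ := by rw [setIntegral_univ]
      _ = ∫ s in Set.Iic 0 ∪ (Set.Ioc 0 (δ*x) ∪ Set.Ioi (δ*x)), s*fLc s x ∂μ := by rw [h1]
      _ = _ := by
          rw [setIntegral_union hd1 ((measurableSet_Ioc).union measurableSet_Ioi)
            ((hsfLcInt x hxx₀').integrableOn) ((hsfLcInt x hxx₀').integrableOn),
            setIntegral_union hd2 measurableSet_Ioi
            ((hsfLcInt x hxx₀').integrableOn) ((hsfLcInt x hxx₀').integrableOn)]
    have hIic0 : ∫ s in Set.Iic 0, s*fLc s x ∂μ = 0 := by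
      have hz : ∀ᵐ s ∂(μ.restrict (Set.Iic 0)), s*fLc s x = (0:ℝ) := by
        filter_upwards [ae_restrict_of_ae hae0, ae_restrict_mem measurableSet_Iic]
          with s h0 hmem
        have hs0 : s = 0 := le_antisymm hmem h0
        rw [hs0, zero_mul]
      calc ∫ s in Set.Iic 0, s*fLc s x ∂μ = ∫ _ in Set.Iic (0:ℝ), (0:ℝ) ∂μ :=
            integral_congr_ae hz
      _ = 0 := by simp
    have hE3 : ∫ s in Set.Ioi (δ*x), s*fLc s x ∂μ ≤ ea * I x := by
      obtain ⟨hJint, hJbd⟩ := hJ (δ*x) hδxX₂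
      have h1 : ∫ s in Set.Ioi (δ*x), s*fLc s x ∂μ ≤
          ∫ s in Set.Ioi (δ*x), (2/(x-x₀))*s ∂μ := by
        refine setIntegral_mono_ae_restrict ((hsfLcInt x hxx₀').integrableOn)
          (hJint.const_mul _) ?_
        filter_upwards [ae_restrict_of_ae (hfLcbd x hxx₀'), ae_restrict_of_ae hae0]
          with s h1' h0
        calc s * fLc s x ≤ s * (2/(x-x₀)) := mul_le_mul_of_nonneg_left h1' h0
        _ = 2/(x-x₀)*s := mul_comm _ _
      have h2 : ∫ s in Set.Ioi (δ*x), (2/(x-x₀))*s ∂μ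
          = (2/(x-x₀)) * ∫ s in Set.Ioi (δ*x), s ∂μ := integral_const_mul _ _
      have hxx₀pos : (0:ℝ) < x - x₀ := by linarith
      have h3 : (2/(x-x₀)) * ∫ s in Set.Ioi (δ*x), s ∂μ ≤
          (2/(x-x₀)) * (cg*(δ*x*tail P S (δ*x))) :=
        mul_le_mul_of_nonneg_left hJbd (by positivity)
      have htb : tail P S (δ*x) ≤ C₁*(δ*x)^(-ρ₂) := htailSbd _ hδxX₂
      have h5 : 2/(x-x₀) ≤ 4/x := by
        rw [div_le_div_iff₀ hxx₀pos hx0]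
        linarith
      have h6 : (0:ℝ) ≤ cg*(δ*x*tail P S (δ*x)) :=
        mul_nonneg hcgpos.le (mul_nonneg (by positivity) (htnn S _))
      have h4 : (2/(x-x₀)) * (cg*(δ*x*tail P S (δ*x))) ≤ (4*δ*cg*C₁)*(δ*x)^(-ρ₂) := by
        calc (2/(x-x₀)) * (cg*(δ*x*tail P S (δ*x)))
            ≤ (4/x) * (cg*(δ*x*tail P S (δ*x))) := mul_le_mul_of_nonneg_right h5 h6
        _ = (4*δ*cg)*tail P S (δ*x) := by
            field_simp
        _ ≤ (4*δ*cg)*(C₁*(δ*x)^(-ρ₂)) :=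
            mul_le_mul_of_nonneg_left htb (by positivity)
        _ = (4*δ*cg*C₁)*(δ*x)^(-ρ₂) := by ring
      calc ∫ s in Set.Ioi (δ*x), s*fLc s x ∂μ ≤ ∫ s in Set.Ioi (δ*x), (2/(x-x₀))*s ∂μ := h1
      _ = (2/(x-x₀)) * ∫ s in Set.Ioi (δ*x), s ∂μ := h2
      _ ≤ (2/(x-x₀)) * (cg*(δ*x*tail P S (δ*x))) := h3
      _ ≤ (4*δ*cg*C₁)*(δ*x)^(-ρ₂) := h4
      _ ≤ ea*(c₂*x^(-ρ₁)) := hv2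
      _ ≤ ea*I x := mul_le_mul_of_nonneg_left hIlo heapos.le
    -- upper bound
    have hupper : (P E).toReal ≤ (1+4*ea) * I x := by
      rw [hEdecomp]
      have h1 : ∑ k ∈ Finset.range Dn, (P (E ∩ S ⁻¹' (B k))).toReal ≤
          M * (∫ s in Set.Ioc 0 (δ*x), s*fLc s x ∂μ)
          + (h*M) * (∫ s in Set.Ioc 0 (δ*x), fLc s x ∂μ) := by
        calc ∑ k ∈ Finset.range Dn, (P (E ∩ S ⁻¹' (B k))).toReal
            ≤ ∑ k ∈ Finset.range Dn, ∫ s in B k, (M*(s*fLc s x)+(h*M)*fLc s x) ∂μ :=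
              Finset.sum_le_sum hupk
        _ = ∫ s in Set.Ioc 0 (δ*x), (M*(s*fLc s x)+(h*M)*fLc s x) ∂μ := hsum_up
        _ = M * (∫ s in Set.Ioc 0 (δ*x), s*fLc s x ∂μ)
            + (h*M) * (∫ s in Set.Ioc 0 (δ*x), fLc s x ∂μ) := by
            rw [integral_add (((hsfLcInt x hxx₀').const_mul M).integrableOn)
              (((hfLcInt x hxx₀').const_mul (h*M)).integrableOn),
              integral_const_mul, integral_const_mul]
      have h2 : M * (∫ s in Set.Ioc 0 (δ*x), s*fLc s x ∂μ) ≤ M * I x :=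
        mul_le_mul_of_nonneg_left hIoc_sfLc_le hMpos.le
      have h3 : (h*M) * (∫ s in Set.Ioc 0 (δ*x), fLc s x ∂μ) ≤ M*(ea*I x) := by
        have h3a : (0 :ℝ) ≤ ∫ s in Set.Ioc 0 (δ*x), fLc s x ∂μ := by
          refine setIntegral_nonneg_of_ae_restrict ?_
          filter_upwards [ae_restrict_of_ae hE] with s hs
          exact (hs.1 x hxx₀'.le).le
        calc (h*M) * (∫ s in Set.Ioc 0 (δ*x), fLc s x ∂μ)
            = M*(h*(∫ s in Set.Ioc 0 (δ*x), fLc s x ∂μ)) := by ring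
        _ ≤ M*(h*fL x) := by
            refine mul_le_mul_of_nonneg_left ?_ hMpos.le
            exact mul_le_mul_of_nonneg_left hIoc_fLc_le hhpos.le
        _ ≤ M*(ea*I x) := mul_le_mul_of_nonneg_left hhfL hMpos.le
      have hea1 : ea ≤ 1 := by linarith
      calc (∑ k ∈ Finset.range Dn, (P (E ∩ S ⁻¹' (B k))).toReal)
          + (P (E ∩ S ⁻¹' (Set.Ioi (δ*x)))).toReal
          ≤ (M * I x + M*(ea*I x)) + ea*I x := by linarith only [h1, h2, h3, htailterm]
      _ ≤ ((1+ea) * I x + (1+ea)*(ea*I x)) + ea*I x := by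
          have ha := mul_le_mul_of_nonneg_right hM1 hIpos.le
          have hb := mul_le_mul_of_nonneg_right hM1 (mul_nonneg heapos.le hIpos.le)
          linarith only [ha, hb]
      _ ≤ (1+4*ea)*I x := by
          have hea1 : ea ≤ 1 := by linarith only [hea14]
          have hc := mul_le_mul_of_nonneg_right hea1 (mul_nonneg heapos.le hIpos.le)
          linarith only [hc]
    -- lower bound
    have hlower : (1-2*ea)*I x ≤ (P E).toReal := by
      rw [hEdecomp]
      have h0 : 0 ≤ (P (E ∩ S ⁻¹' (Set.Ioi (δ*x)))).toReal := ENNReal.toReal_nonneg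
      have h1 : ∫ s in Set.Ioc 0 (δ*x), (s*fLc s x - h*fLc s x) ∂μ ≤
          ∑ k ∈ Finset.range Dn, (P (E ∩ S ⁻¹' (B k))).toReal := by
        calc ∫ s in Set.Ioc 0 (δ*x), (s*fLc s x - h*fLc s x) ∂μ
            = ∑ k ∈ Finset.range Dn, ∫ s in B k, (s*fLc s x - h*fLc s x) ∂μ := hsum_lo.symm
        _ ≤ ∑ k ∈ Finset.range Dn, (P (E ∩ S ⁻¹' (B k))).toReal := Finset.sum_le_sum hlok
      have h2 : ∫ s in Set.Ioc 0 (δ*x), (s*fLc s x - h*fLc s x) ∂μ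
          = (∫ s in Set.Ioc 0 (δ*x), s*fLc s x ∂μ)
            - h * (∫ s in Set.Ioc 0 (δ*x), fLc s x ∂μ) := by
        rw [integral_sub ((hsfLcInt x hxx₀').integrableOn)
          (((hfLcInt x hxx₀').const_mul h).integrableOn), integral_const_mul]
      have h3 : I x - ea*I x ≤ ∫ s in Set.Ioc 0 (δ*x), s*fLc s x ∂μ := by
        have h3a := hIdecomp
        rw [hIic0] at h3a
        linarith only [h3a, hE3]
      have h5 : h * (∫ s in Set.Ioc 0 (δ*x), fLc s x ∂μ) ≤ ea * I x := by
        calc h * (∫ s in Set.Ioc 0 (δ*x), fLc s x ∂μ) ≤ h * fL x :=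
              mul_le_mul_of_nonneg_left hIoc_fLc_le hhpos.le
        _ ≤ ea * I x := hhfL
      linarith only [h0, h1, h2, h3, h5]
    have hDle : (P E).toReal / I x ≤ 1+4*ea := by
      rw [div_le_iff₀ hIpos]
      linarith only [hupper]
    have hDge : 1-2*ea ≤ (P E).toReal / I x := by
      rw [le_div_iff₀ hIpos]
      linarith only [hlower]
    rw [abs_le]
    constructor
    · linarith only [hDge, heapos]
    · linarith only [hDle]
  -- FINAL assembly
  rw [Metric.tendsto_atTop]
  intro ε hε
  have heapos : (0:ℝ) < min (ε/8) (1/4) := lt_min (by linarith) (by norm_num)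
  have hkey := hKEY (min (ε/8) (1/4)) heapos (min_le_right _ _)
  have hev : ∀ᶠ x in atTop, (((cdf' P (fun ω => L ω + S ω) x - cdf' P L x) / fL x) /
      (-(∫ s, s * (fLc s x / fL x) ∂μ)))
      = (P {ω | L ω ≤ x ∧ x < L ω + S ω}).toReal / I x := by
    filter_upwards [eventually_ge_atTop X₃, eventually_ge_atTop (x₀+1)] with x hxX₃ hxx₀
    have hxx₀' : x₀ < x := by linarith
    obtain ⟨hIlo, hIpos⟩ := hIlower x hxX₃
    have hfLx : 0 < fL x := hfLpos x hxx₀'.le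
    have hden : ∫ s, s * (fLc s x / fL x) ∂μ = I x / fL x := by
      rw [hIdef]
      simp only
      rw [← integral_div]
      congr 1
      ext s
      rw [mul_div_assoc]
    have hnum : cdf' P (fun ω => L ω + S ω) x - cdf' P L x
        = -(P {ω | L ω ≤ x ∧ x < L ω + S ω}).toReal := by
      have hsub : {ω | L ω + S ω ≤ x} ⊆ {ω | L ω ≤ x} := by
        intro ω hω
        have h1 := hSpos ω
        have h2 : L ω + S ω ≤ x := hω
        simp only [Set.mem_setOf_eq]
        linarith
      have hdiff : {ω | L ω ≤ x} \ {ω | L ω + S ω ≤ x}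
          = {ω | L ω ≤ x ∧ x < L ω + S ω} := by
        ext ω
        simp only [Set.mem_diff, Set.mem_setOf_eq, not_le]
      have hmeas2 : MeasurableSet {ω | L ω + S ω ≤ x} :=
        measurableSet_le (hL.add hS) measurable_const
      have hmd := measure_diff hsub hmeas2.nullMeasurableSet (measure_ne_top P _)
      rw [hdiff] at hmd
      rw [cdf', cdf', hmd, ENNReal.toReal_sub_of_le (measure_mono hsub) (measure_ne_top P _)]
      ring
    rw [hnum, hden]
    rw [neg_div, neg_div_neg_eq]
    rw [div_div_div_cancel_right₀]
    exact ne_of_gt hfLx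
  obtain ⟨N1, hN1⟩ := eventually_atTop.mp (hkey.and hev)
  refine ⟨N1, fun x hx => ?_⟩
  obtain ⟨h1, h2⟩ := hN1 x hx
  rw [Real.dist_eq, h2]
  have h3 : 4 * min (ε/8) (1/4) ≤ ε/2 := by
    have := min_le_left (ε/8) (1/4)
    linarith
  calc |(P {ω | L ω ≤ x ∧ x < L ω + S ω}).toReal / I x - 1| ≤ 4 * min (ε/8) (1/4) := h1
  _ ≤ ε/2 := h3
  _ < ε := by linarith
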